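/- Let T > 0 be fixed. There exists a constant c_T > 0 such that for all a ≤ 1 and all b ∈ ℝ with (a,b) ≠ (0,0), one has tanh(T·√(a²+b²)) / (√(a²+b²) - a·tanh(T·√(a²+b²))) ≥ c_T / (1 + |a| + |b|). -/
import Mathlib


theorem riccati_kappa_lower_bound_a_le_one (T : ℝ) (hT : 0 < T) :
    ∃ c : ℝ, 0 < c ∧ ∀ a b : ℝ, a ≤ 1 → ¬(a = 0 ∧ b = 0) →
      Real.tanh (T * Real.sqrt (a ^ 2 + b ^ 2)) /
          (Real.sqrt (a ^ 2 + b ^ 2) - a * Real.tanh (T * Real.sqrt (a ^ 2 + b ^ 2)))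
        ≥ c / (1 + |a| + |b|) := by
  have hC1 : (1 : ℝ) ≤ Real.cosh 1 := Real.one_le_cosh 1
  have hC1pos : (0 : ℝ) < Real.cosh 1 := Real.cosh_pos 1
  refine ⟨min T 1 / (2 * Real.cosh 1), by positivity, ?_⟩
  intro a b _ hab
  set r := Real.sqrt (a ^ 2 + b ^ 2) with hrdef
  have hab2 : 0 < a ^ 2 + b ^ 2 := by
    rcases (not_and_or.1 hab) with h | h <;> positivity
  have hrpos : 0 < r := Real.sqrt_pos.2 hab2
  have hr2 : r ^ 2 = a ^ 2 + b ^ 2 := Real.sq_sqrt hab2.le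
  have har : |a| ≤ r := by nlinarith [abs_nonneg a, sq_abs a, sq_nonneg b]
  have hbr : |b| ≤ r := by nlinarith [abs_nonneg b, sq_abs b, sq_nonneg a]
  have hsum : r ≤ |a| + |b| := by
    nlinarith [abs_nonneg a, abs_nonneg b, sq_abs a, sq_abs b,
      mul_nonneg (abs_nonneg a) (abs_nonneg b)]
  set t := Real.tanh (T * r) with htdef
  have hTr : 0 < T * r := mul_pos hT hrpos
  have hcosh : 0 < Real.cosh (T * r) := Real.cosh_pos _
  have ht0 : 0 < t := by
    rw [htdef, Real.tanh_eq_sinh_div_cosh]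
    exact div_pos (Real.sinh_pos_iff.2 hTr) hcosh
  have ht1 : t < 1 := by
    rw [htdef, Real.tanh_eq_sinh_div_cosh, div_lt_one hcosh]
    exact Real.sinh_lt_cosh _
  have hden : 0 < r - a * t := by
    rcases le_or_gt a 0 with h | h
    · nlinarith
    · have ha_r : a ≤ r := le_trans (le_abs_self a) har
      nlinarith [mul_lt_mul_of_pos_left ht1 h]
  -- key: min (T*r) 1 ≤ t * cosh 1
  have hkey : min (T * r) 1 ≤ t * Real.cosh 1 := by
    rcases le_total (T * r) 1 with h | h
    · rw [min_eq_left h]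
      have h1 : T * r ≤ Real.sinh (T * r) := Real.self_le_sinh_iff.2 hTr.le
      have h2 : Real.cosh (T * r) ≤ Real.cosh 1 :=
        Real.cosh_le_cosh.2 (by rwa [abs_of_pos hTr, abs_one])
      have : t * Real.cosh (T * r) = Real.sinh (T * r) := by
        rw [htdef, Real.tanh_eq_sinh_div_cosh, div_mul_cancel₀ _ hcosh.ne']
      nlinarith [mul_le_mul_of_nonneg_left h2 ht0.le]
    · rw [min_eq_right h]
      have hs : 0 ≤ Real.sinh (T * r - 1) := Real.sinh_nonneg_iff.2 (by linarith)
      rw [Real.sinh_sub] at hs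
      have hts : t * Real.cosh (T * r) = Real.sinh (T * r) := by
        rw [htdef, Real.tanh_eq_sinh_div_cosh, div_mul_cancel₀ _ hcosh.ne']
      -- sinh(Tr) * cosh 1 ≥ cosh(Tr) * sinh 1 ≥ cosh(Tr) * 1? No: sinh 1 ≥ 1? yes
      have hsinh1 : (1 : ℝ) ≤ Real.sinh 1 := Real.self_le_sinh_iff.2 zero_le_one
      -- t * cosh 1 = sinh(Tr) * cosh 1 / cosh(Tr) ≥ sinh 1 ≥ 1
      have : Real.cosh (T * r) * 1 ≤ Real.sinh (T * r) * Real.cosh 1 := by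
        nlinarith [hcosh]
      nlinarith [hcosh, hts]
  rw [ge_iff_le, div_le_div_iff₀ (by positivity) hden, div_mul_eq_mul_div,
    div_le_iff₀ (by positivity : (0:ℝ) < 2 * Real.cosh 1)]
  -- goal : min T 1 * (r - a * t) ≤ t * (1 + |a| + |b|) * (2 * cosh 1)
  have hane : 0 ≤ |a| := abs_nonneg a
  have hbne : 0 ≤ |b| := abs_nonneg b
  rcases le_total (T * r) 1 with h | h
  · have hk : T * r ≤ t * Real.cosh 1 := by rw [min_eq_left h] at hkey; exact hkey
    have h1 : r - a * t ≤ 2 * r := by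
      nlinarith [mul_nonneg (by linarith [neg_abs_le a] : (0:ℝ) ≤ |a| + a) ht0.le,
        mul_nonneg hane (by linarith : (0:ℝ) ≤ 1 - t)]
    calc min T 1 * (r - a * t) ≤ T * (2 * r) :=
          mul_le_mul (min_le_left T 1) h1 hden.le hT.le
      _ = 2 * (T * r) := by ring
      _ ≤ 2 * (t * Real.cosh 1) := by linarith
      _ ≤ t * (1 + |a| + |b|) * (2 * Real.cosh 1) := by
          have hexp : t * (1 + |a| + |b|) * (2 * Real.cosh 1)
              = 2 * (t * Real.cosh 1) + 2 * ((t * Real.cosh 1) * (|a| + |b|)) := by ring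
          have hnn : 0 ≤ (t * Real.cosh 1) * (|a| + |b|) :=
            mul_nonneg (mul_nonneg ht0.le hC1pos.le) (by linarith)
          linarith
  · have hk : (1 : ℝ) ≤ t * Real.cosh 1 := by rw [min_eq_right h] at hkey; exact hkey
    calc min T 1 * (r - a * t) ≤ 1 * (r - a * t) :=
          mul_le_mul_of_nonneg_right (min_le_right T 1) hden.le
      _ ≤ 2 * (1 + |a| + |b|) := by
          have q1 : -a * t ≤ |a| * t :=
            mul_le_mul_of_nonneg_right (by linarith [neg_abs_le a]) ht0.le
          have q2 : |a| * t ≤ |a| * 1 := mul_le_mul_of_nonneg_left ht1.le hane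
          linarith
      _ ≤ t * (1 + |a| + |b|) * (2 * Real.cosh 1) := by
          have hexp : t * (1 + |a| + |b|) * (2 * Real.cosh 1)
              = 2 * ((t * Real.cosh 1) * (1 + |a| + |b|)) := by ring
          have hnn : 1 * (1 + |a| + |b|) ≤ (t * Real.cosh 1) * (1 + |a| + |b|) :=
            mul_le_mul_of_nonneg_right hk (by linarith)
          linarith
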